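/- arXiv:2508.21264 — 5 statements merged into one kernel-verified Lean document; each statement's English description precedes it below -/
import Mathlib

section
/- Let G be a group with elements τ, σ, h_i, h_j satisfying σ² = 1, σ = [h_i, h_j] (where [a,b] := a⁻¹b⁻¹ab), and τ^(h_j⁻¹) = τ^σ (where a^b := b a b⁻¹). Then τ^(h_i) commutes with h_j, i.e. [τ^(h_i), h_j] = 1. -/
theorem tau_conj_commutes {G : Type*} [Group G] (τ σ hi hj : G)
    (hσ : σ ^ 2 = 1) (hcomm : σ = hi⁻¹ * hj⁻¹ * hi * hj)
    (hτ : hj⁻¹ * τ * hj = σ * τ * σ⁻¹) :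
    (hi * τ * hi⁻¹)⁻¹ * hj⁻¹ * (hi * τ * hi⁻¹) * hj = 1 := by
  have h1 : hj⁻¹ * hi = hi * σ * hj⁻¹ := by rw [hcomm]; group
  have hσ' : σ * σ = 1 := by rw [← sq]; exact hσ
  have key : hj⁻¹ * (hi * τ * hi⁻¹) * hj = hi * τ * hi⁻¹ := by
    calc hj⁻¹ * (hi * τ * hi⁻¹) * hj
        = (hj⁻¹ * hi) * τ * (hj⁻¹ * hi)⁻¹ := by group
      _ = (hi * σ * hj⁻¹) * τ * (hi * σ * hj⁻¹)⁻¹ := by rw [h1]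
      _ = hi * σ * (hj⁻¹ * τ * hj) * σ⁻¹ * hi⁻¹ := by group
      _ = hi * σ * (σ * τ * σ⁻¹) * σ⁻¹ * hi⁻¹ := by rw [hτ]
      _ = hi * (σ * σ) * τ * (σ * σ)⁻¹ * hi⁻¹ := by group
      _ = hi * τ * hi⁻¹ := by rw [hσ']; group
  calc (hi * τ * hi⁻¹)⁻¹ * hj⁻¹ * (hi * τ * hi⁻¹) * hj
      = (hi * τ * hi⁻¹)⁻¹ * (hj⁻¹ * (hi * τ * hi⁻¹) * hj) := by group
    _ = 1 := by rw [key]; group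
end

section
/- Let G be a group with elements σ, h_i, h_j satisfying σ² = 1, (σ^(h_j⁻¹) * σ)³ = 1, σ^(h_i⁻¹) = σ^(h_j⁻¹), and σ = [h_i, h_j]. Then h_j commutes with σ^(h_i²), i.e. [h_j, h_i² σ h_i⁻²] = 1. -/
theorem hj_commutes_sigma_hi_sq {G : Type*} [Group G] (σ hi hj : G)
    (h1 : σ ^ 2 = 1)
    (h2 : ((hj⁻¹ * σ * hj) * σ) ^ 3 = 1)
    (h3 : hi⁻¹ * σ * hi = hj⁻¹ * σ * hj)
    (h4 : σ = hi⁻¹ * hj⁻¹ * hi * hj) :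
    hj⁻¹ * (hi ^ 2 * σ * (hi ^ 2)⁻¹)⁻¹ * hj * (hi ^ 2 * σ * (hi ^ 2)⁻¹) = 1 := by
  set t := hi⁻¹ * σ * hi with ht
  have h5 : σ⁻¹ = σ := by
    rw [pow_two] at h1
    exact inv_eq_of_mul_eq_one_right h1
  have h6 : hj⁻¹ * hi * hj = hi * σ := by rw [h4]; group
  have h7 : σ * hi = hi * t := by rw [ht]; group
  have h8 : hi⁻¹ * σ = t * hi⁻¹ := by rw [ht]; group
  rw [← h3] at h2
  have h10 : t * σ * t * σ * t * σ = 1 := by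
    rw [show t * σ * t * σ * t * σ = (t * σ) ^ 3 by
      rw [pow_succ, pow_succ, pow_one]; simp [mul_assoc]]
    exact h2
  have h9 : t * σ * t * σ * t = σ := (eq_inv_of_mul_eq_one_left h10).trans h5
  have key : hj⁻¹ * (hi ^ 2 * σ * (hi ^ 2)⁻¹) * hj = hi ^ 2 * σ * (hi ^ 2)⁻¹ := by
    simp only [pow_two, mul_inv_rev]
    calc hj⁻¹ * (hi * hi * σ * (hi⁻¹ * hi⁻¹)) * hj
        = (hj⁻¹ * hi * hj) * (hj⁻¹ * hi * hj) * (hj⁻¹ * σ * hj) *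
          (hj⁻¹ * hi * hj)⁻¹ * (hj⁻¹ * hi * hj)⁻¹ := by group
      _ = (hi * σ) * (hi * σ) * t * (hi * σ)⁻¹ * (hi * σ)⁻¹ := by
            rw [h6, ← h3, ht]
      _ = hi * (σ * hi) * (σ * t * σ⁻¹) * (hi⁻¹ * σ⁻¹) * hi⁻¹ := by group
      _ = hi * (σ * hi) * (σ * t * σ) * (hi⁻¹ * σ) * hi⁻¹ := by rw [h5]
      _ = hi * (hi * t) * (σ * t * σ) * (t * hi⁻¹) * hi⁻¹ := by rw [h7, h8]
      _ = hi * hi * (t * σ * t * σ * t) * hi⁻¹ * hi⁻¹ := by group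
      _ = hi * hi * σ * hi⁻¹ * hi⁻¹ := by rw [h9]
      _ = hi * hi * σ * (hi⁻¹ * hi⁻¹) := by group
  calc hj⁻¹ * (hi ^ 2 * σ * (hi ^ 2)⁻¹)⁻¹ * hj * (hi ^ 2 * σ * (hi ^ 2)⁻¹)
      = (hj⁻¹ * (hi ^ 2 * σ * (hi ^ 2)⁻¹) * hj)⁻¹ * (hi ^ 2 * σ * (hi ^ 2)⁻¹) := by group
    _ = 1 := by rw [key]; group
end

section
/- Let G be a group with elements σ, h_i, h_j such that σ = [h_i, h_j], [h_j, σ^(h_i²)] = 1, and [σ, σ^(h_iᵏ)] = 1 for all integers k ≥ 2. Then [h_j, σ^(h_iᵏ)] = 1 for all k ≥ 2, where σ^(h_iᵏ) := h_iᵏ σ h_i⁻ᵏ. -/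
private lemma comm_aux {G : Type*} [Group G] (a b : G) :
    b⁻¹ * a⁻¹ * b * a = 1 ↔ b * a = a * b := by
  constructor
  · intro h
    have := congrArg (fun x => a * b * x) h
    simpa [mul_assoc] using this
  · intro h
    rw [mul_assoc, mul_assoc, h]
    group

theorem hj_commutes_sigma_hi_pow {G : Type*} [Group G] (σ hi hj : G)
    (h1 : σ = hi⁻¹ * hj⁻¹ * hi * hj)
    (h2 : hj⁻¹ * (hi ^ 2 * σ * (hi ^ 2)⁻¹)⁻¹ * hj * (hi ^ 2 * σ * (hi ^ 2)⁻¹) = 1)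
    (h3 : ∀ k : ℕ, 2 ≤ k →
      σ⁻¹ * (hi ^ k * σ * (hi ^ k)⁻¹)⁻¹ * σ * (hi ^ k * σ * (hi ^ k)⁻¹) = 1) :
    ∀ k : ℕ, 2 ≤ k →
      hj⁻¹ * (hi ^ k * σ * (hi ^ k)⁻¹)⁻¹ * hj * (hi ^ k * σ * (hi ^ k)⁻¹) = 1 := by
  have hcomm : hj * hi = hi * hj * σ⁻¹ := by
    rw [h1]; group
  intro k hk
  induction k, hk using Nat.le_induction with
  | base => exact h2
  | succ n hn ih =>
    rw [comm_aux] at ih ⊢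
    have hσ := (comm_aux _ _).mp (h3 n hn)
    set τ := hi ^ n * σ * (hi ^ n)⁻¹ with hτ
    have hstep : hi ^ (n + 1) * σ * (hi ^ (n + 1))⁻¹ = hi * τ * hi⁻¹ := by
      rw [hτ]; rw [pow_succ']; group
    rw [hstep]
    have hστ : σ⁻¹ * τ = τ * σ⁻¹ := by
      calc σ⁻¹ * τ = σ⁻¹ * (τ * σ) * σ⁻¹ := by group
        _ = σ⁻¹ * (σ * τ) * σ⁻¹ := by rw [hσ]
        _ = τ * σ⁻¹ := by group
    have hlast : hj * σ⁻¹ * hi⁻¹ = hi⁻¹ * hj := by rw [h1]; group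
    calc hj * (hi * τ * hi⁻¹)
        = (hj * hi) * τ * hi⁻¹ := by group
      _ = hi * hj * (σ⁻¹ * τ) * hi⁻¹ := by rw [hcomm]; group
      _ = hi * (hj * τ) * (σ⁻¹ * hi⁻¹) := by rw [hστ]; group
      _ = hi * τ * (hj * σ⁻¹ * hi⁻¹) := by rw [ih]; group
      _ = hi * τ * (hi⁻¹ * hj) := by rw [hlast]
      _ = _ := by group
end

section
/- Let G be a group with elements η, σ, h_i, h_j satisfying σ = [h_i, h_j], η^(h_i) = η^(σ * σ^(h_i)), and η^(h_i⁻¹) = η^(h_j⁻¹). Then η^(h_i²) commutes with h_j, i.e. [η^(h_i²), h_j] = 1. -/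
theorem eta_hi_sq_commutes_hj {G : Type*} [Group G] (η σ hi hj : G)
    (h1 : σ = hi⁻¹ * hj⁻¹ * hi * hj)
    (h2 : hi * η * hi⁻¹ =
      (σ * (hi * σ * hi⁻¹)) * η * (σ * (hi * σ * hi⁻¹))⁻¹)
    (h3 : hi⁻¹ * η * hi = hj⁻¹ * η * hj) :
    (hi ^ 2 * η * (hi ^ 2)⁻¹)⁻¹ * hj⁻¹ * (hi ^ 2 * η * (hi ^ 2)⁻¹) * hj = 1 := by
  subst h1
  have h3' : hj * (hi⁻¹ * η * hi) * hj⁻¹ = η := by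
    rw [h3]; simp [mul_assoc]
  have key : hj * (hi^2 * η * (hi^2)⁻¹) * hj⁻¹ = hi^2 * η * (hi^2)⁻¹ := by
    calc hj * (hi^2 * η * (hi^2)⁻¹) * hj⁻¹
        = hj * hi * (hi * η * hi⁻¹) * hi⁻¹ * hj⁻¹ := by
          simp [mul_assoc, pow_two]
      _ = hj * hi * (hi⁻¹ * hj⁻¹ * hi * hj * (hi * (hi⁻¹ * hj⁻¹ * hi * hj) * hi⁻¹) * η * (hi⁻¹ * hj⁻¹ * hi * hj * (hi * (hi⁻¹ * hj⁻¹ * hi * hj) * hi⁻¹))⁻¹) * hi⁻¹ * hj⁻¹ := by rw [h2]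
      _ = hi^2 * (hj * (hi⁻¹ * η * hi) * hj⁻¹) * (hi^2)⁻¹ := by
          simp [mul_assoc, pow_two]
      _ = hi^2 * η * (hi^2)⁻¹ := by rw [h3']
  calc (hi ^ 2 * η * (hi ^ 2)⁻¹)⁻¹ * hj⁻¹ * (hi ^ 2 * η * (hi ^ 2)⁻¹) * hj
      = (hi ^ 2 * η * (hi ^ 2)⁻¹)⁻¹ * hj⁻¹ * (hj * (hi ^ 2 * η * (hi ^ 2)⁻¹) * hj⁻¹) * hj := by rw [key]
    _ = 1 := by simp [mul_assoc]
end

section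
/- Fix r ≥ 1 and let f, g be permutations of Fin r × ℕ that are eventual translations (there exist N_f, N_g ∈ ℕ and t_f, t_g : Fin r → ℤ with f(i,n) = (i, n + t_f i) for n ≥ N_f and g(i,n) = (i, n + t_g i) for n ≥ N_g). Then the commutator f⁻¹ g⁻¹ f g has finite support, i.e. it fixes all but finitely many points of Fin r × ℕ. -/
theorem commutator_of_eventual_translations_finite_support (r : ℕ) (hr : 1 ≤ r)
    (f g : Equiv.Perm (Fin r × ℕ))
    (Nf Ng : ℕ) (tf tg : Fin r → ℤ)
    (hf : ∀ (i : Fin r) (n : ℕ), Nf ≤ n →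
      (f (i, n)).1 = i ∧ ((f (i, n)).2 : ℤ) = (n : ℤ) + tf i)
    (hg : ∀ (i : Fin r) (n : ℕ), Ng ≤ n →
      (g (i, n)).1 = i ∧ ((g (i, n)).2 : ℤ) = (n : ℤ) + tg i) :
    {x : Fin r × ℕ | (f⁻¹ * g⁻¹ * f * g) x ≠ x}.Finite := by
  classical
  set T : ℕ := Finset.univ.sup (fun i : Fin r => (tf i).natAbs + (tg i).natAbs) with hT
  set M : ℕ := Nf + Ng + T with hM
  apply Set.Finite.subset ((Set.finite_univ (α := Fin r)).prod (Set.finite_Iio M))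
  rintro ⟨i, n⟩ hx
  simp only [Set.mem_prod, Set.mem_univ, true_and, Set.mem_Iio]
  by_contra hn
  push_neg at hn
  apply hx
  have hTi : (tf i).natAbs + (tg i).natAbs ≤ T :=
    Finset.le_sup (f := fun i : Fin r => (tf i).natAbs + (tg i).natAbs) (Finset.mem_univ i)
  -- g (i, n)
  obtain ⟨hg1, hg2⟩ := hg i n (by omega)
  set n1 : ℕ := (g (i, n)).2 with hn1
  have hgval : g (i, n) = (i, n1) := Prod.ext hg1 hn1.symm
  have hNfn1 : Nf ≤ n1 := by omega
  -- f (i, n1)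
  obtain ⟨hf1, hf2⟩ := hf i n1 hNfn1
  set n2 : ℕ := (f (i, n1)).2 with hn2
  have hfval : f (i, n1) = (i, n2) := Prod.ext hf1 hn2.symm
  -- f (i, n)
  obtain ⟨hf1', hf2'⟩ := hf i n (by omega)
  set n4 : ℕ := (f (i, n)).2 with hn4
  have hfval' : f (i, n) = (i, n4) := Prod.ext hf1' hn4.symm
  have hNgn4 : Ng ≤ n4 := by omega
  -- g (i, n4)
  obtain ⟨hg1', hg2'⟩ := hg i n4 hNgn4
  set n5 : ℕ := (g (i, n4)).2 with hn5
  have hgval' : g (i, n4) = (i, n5) := Prod.ext hg1' hn5.symm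
  have hn5n2 : n5 = n2 := by omega
  -- assemble
  have hginv : g⁻¹ (i, n2) = (i, n4) := by
    rw [← hn5n2, ← hgval', Equiv.Perm.coe_inv, Equiv.symm_apply_apply]
  have hfinv : f⁻¹ (i, n4) = (i, n) := by
    rw [← hfval', Equiv.Perm.coe_inv, Equiv.symm_apply_apply]
  show f⁻¹ (g⁻¹ (f (g (i, n)))) = (i, n)
  rw [hgval, hfval, hginv, hfinv]
end
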